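/- arXiv:2506.16021 — 3 statements merged into one kernel-verified Lean document; each statement's English description precedes it below -/
import Mathlib

section
/- For every integer k ≥ 2 and every finite sequence of n ≥ 1 distinct points in the plane in general position, the ordered Θ_k-graph G = (V, E) built on this sequence is a connected graph. -/
/-!
Ordered Θ_k-graphs: common definitions.

Points live in the plane, modelled as `ℂ`.  For a point `u`, the plane is
partitioned into `k` cones of aperture `θ = 2π/k`; cone `j` has as bisector the
ray from `u` in direction `exp((π/2 - j·θ)·I)` (cone `0` points upwards, cones
are numbered clockwise).  A point `w ≠ u` lies (in the interior of) cone `j` of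
`u` iff the angle between `w - u` and the bisector is `< θ/2`.  `projDist`
measures the length of the orthogonal projection of `w - u` onto the bisector
of cone `j`.  Insertion orders: vertex `i : Fin n` is the `(i+1)`-st inserted
vertex, so `ρ(v) < ρ(u)` is `v < u`.
-/

namespace OrderedTheta

noncomputable def theta (k : ℕ) : ℝ := 2 * Real.pi / k

/-- Unit vector along the bisector of the `j`-th cone. -/
noncomputable def dir (k j : ℕ) : ℂ :=
  Complex.exp ((Real.pi / 2 - j * theta k) * Complex.I)

/-- `w` lies in the (open) cone number `j` of apex `u`. -/
def inCone (k : ℕ) (u w : ℂ) (j : ℕ) : Prop :=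
  w ≠ u ∧ |Complex.arg ((w - u) / dir k j)| < theta k / 2

/-- The distance `|u w'|` from `u` to the orthogonal projection `w'` of `w`
onto the bisector of cone `j` of `u` (for `w` in the open cone `j` this equals
the signed component of `w - u` along the bisector direction). -/
noncomputable def projDist (k : ℕ) (u w : ℂ) (j : ℕ) : ℝ :=
  ((w - u) * (starRingEnd ℂ) (dir k j)).re

/-- A sequence of `n` distinct points in the plane, in general position, to be
inserted in the order of their indices; `V i` is the `(i+1)`-st inserted point. -/
structure Config (k n : ℕ) : Type where
  two_le_k : 2 ≤ k
  V : Fin n → ℂ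
  inj : Function.Injective V
  /-- no previously inserted point lies on a boundary ray of a cone of `V i`:
  every earlier point lies in the open cone of some index `c < k`. -/
  gp_cone : ∀ i j : Fin n, j < i → ∃ c < k, inCone k (V i) (V j) c
  /-- two distinct earlier points lying in a common cone of `V i` have distinct
  bisector-projection distances from `V i`. -/
  gp_dist : ∀ i j l : Fin n, j < i → l < i → j ≠ l →
    ∀ c < k, inCone k (V i) (V j) c → inCone k (V i) (V l) c →
      projDist k (V i) (V j) c ≠ projDist k (V i) (V l) c

/-- The edge created upon insertion of `i`, towards the earlier point `j`:
`j` is inserted before `i`, and among all earlier points in the cone of `i`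
containing `j`, `j` is closest (measured along the bisector). -/
def EdgeDir {k n : ℕ} (C : Config k n) (i j : Fin n) : Prop :=
  j < i ∧ ∃ c < k, inCone k (C.V i) (C.V j) c ∧
    ∀ l : Fin n, l < i → inCone k (C.V i) (C.V l) c →
      projDist k (C.V i) (C.V j) c ≤ projDist k (C.V i) (C.V l) c

/-- The ordered Θ_k-graph of a configuration, as an undirected simple graph on
`Fin n`. -/
def graph {k n : ℕ} (C : Config k n) : SimpleGraph (Fin n) where
  Adj i j := EdgeDir C i j ∨ EdgeDir C j i
  symm := ⟨fun _ _ hij => hij.symm⟩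
  loopless := ⟨by
    intro i h
    rcases h with h | h <;> exact absurd h.1 (lt_irrefl i)⟩

/-- `x` lies in the canonical triangle `Δ u w`: `x` lies in the cone of `u`
containing `w` and its projection onto the bisector is at distance at most
`|u w'|` from `u`. -/
def inCanonical (k : ℕ) (u w x : ℂ) : Prop :=
  ∃ c < k, inCone k u w c ∧ inCone k u x c ∧ projDist k u x c ≤ projDist k u w c

/-- `v` is the target of an ordered Θ-routing step from `u` towards the first
inserted vertex `v₁`: it is `v₁` itself if `{u, v₁}` is an edge, and otherwise
the neighbour of `u` of smaller insertion order lying in the canonical triangle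
`Δ u v₁` whose bisector projection is closest to `u`. -/
def IsRoutingStep {k n : ℕ} (C : Config k n) (hn : 0 < n) (u v : Fin n) : Prop :=
  ((graph C).Adj u ⟨0, hn⟩ ∧ v = ⟨0, hn⟩) ∨
  (¬ (graph C).Adj u ⟨0, hn⟩ ∧ (graph C).Adj u v ∧ v < u ∧
    inCanonical k (C.V u) (C.V ⟨0, hn⟩) (C.V v) ∧
    ∀ w : Fin n, (graph C).Adj u w → w < u →
      inCanonical k (C.V u) (C.V ⟨0, hn⟩) (C.V w) →
      ∀ c < k, inCone k (C.V u) (C.V v) c → inCone k (C.V u) (C.V w) c →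
        projDist k (C.V u) (C.V v) c ≤ projDist k (C.V u) (C.V w) c)

/-- `u'` is an exploration candidate neighbour of `u` (with respect to the
destination `t`): `u'` is a neighbour of `u` with `ρ(u) < ρ(u') ≤ ρ(t)` such
that `u` lies in the interior of the cone of `u'` containing `v₁`. -/
def ExplCand {k n : ℕ} (C : Config k n) (hn : 0 < n) (t u u' : Fin n) : Prop :=
  (graph C).Adj u u' ∧ u < u' ∧ u' ≤ t ∧
  ∃ c < k, inCone k (C.V u') (C.V ⟨0, hn⟩) c ∧ inCone k (C.V u') (C.V u) c

/-- The exploration space `S(v₁)`: the smallest set of vertices containing `v₁`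
and closed under taking exploration candidate neighbours. -/
inductive InExplSpace {k n : ℕ} (C : Config k n) (hn : 0 < n) (t : Fin n) : Fin n → Prop
  | base : InExplSpace C hn t ⟨0, hn⟩
  | step {u u' : Fin n} :
      InExplSpace C hn t u → ExplCand C hn t u u' → InExplSpace C hn t u'

/-- The label of a vertex: its coordinates together with its insertion order. -/
noncomputable def label {k n : ℕ} (C : Config k n) (v : Fin n) : ℂ × ℕ :=
  (C.V v, (v : ℕ) + 1)

/-- The vertices at graph distance at most `h` from `u`. -/
def ball {k n : ℕ} (C : Config k n) (u : Fin n) (h : ℕ) : Set (Fin n) :=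
  {v | ∃ p : (graph C).Walk u v, p.length ≤ h}

/-- The data visible to an `h`-local algorithm: a labelled vertex set together
with a labelled edge set. -/
abbrev LocalView : Type := Set (ℂ × ℕ) × Set ((ℂ × ℕ) × (ℂ × ℕ))

/-- The `h`-neighbourhood `B_h(u)`: the induced labelled subgraph on all
vertices at graph distance at most `h` from `u`. -/
noncomputable def view {k n : ℕ} (C : Config k n) (u : Fin n) (h : ℕ) : LocalView :=
  (label C '' ball C u h,
   {e | ∃ a ∈ ball C u h, ∃ b ∈ ball C u h,
      (graph C).Adj a b ∧ e = (label C a, label C b)})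

/-- One step of the descending algorithm `A^down`: move to the neighbour of
minimum insertion order among the neighbours of smaller insertion order. -/
def AdownStep {k n : ℕ} (C : Config k n) (u v : Fin n) : Prop :=
  (graph C).Adj u v ∧ v < u ∧ ∀ v' : Fin n, (graph C).Adj u v' → v' < u → v ≤ v'

/-- The angle of the vector `v - u`, measured counterclockwise from the
positive horizontal direction, normalised to `[0, 2π)`. -/
noncomputable def alpha (u v : ℂ) : ℝ :=
  if 0 ≤ Complex.arg (v - u) then Complex.arg (v - u)
  else Complex.arg (v - u) + 2 * Real.pi

/-- One step of the algorithm `A^up(v₁, t)` on states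
`(current vertex, previous vertex, exploration bit)`. -/
def AupStep {k n : ℕ} (C : Config k n) (hn : 0 < n) (t : Fin n)
    (s s' : Fin n × Option (Fin n) × Bool) : Prop :=
  s.1 ≠ t ∧
  ((s.2.2 = true ∧
     ((∃ v : Fin n, ExplCand C hn t s.1 v ∧
         (∀ v' : Fin n, ExplCand C hn t s.1 v' →
           alpha (C.V s.1) (C.V v) ≤ alpha (C.V s.1) (C.V v')) ∧
         s' = (v, some s.1, true)) ∨
      ((¬ ∃ v : Fin n, ExplCand C hn t s.1 v) ∧
        ∃ u' : Fin n, IsRoutingStep C hn s.1 u' ∧ s' = (u', some s.1, false)))) ∨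
   (s.2.2 = false ∧ ∃ p : Fin n, s.2.1 = some p ∧
     ((∃ v : Fin n,
         (ExplCand C hn t s.1 v ∧ alpha (C.V s.1) (C.V p) < alpha (C.V s.1) (C.V v)) ∧
         (∀ v' : Fin n, ExplCand C hn t s.1 v' →
           alpha (C.V s.1) (C.V p) < alpha (C.V s.1) (C.V v') →
           alpha (C.V s.1) (C.V v) ≤ alpha (C.V s.1) (C.V v')) ∧
         s' = (v, some s.1, true)) ∨
      ((¬ ∃ v : Fin n, ExplCand C hn t s.1 v ∧
          alpha (C.V s.1) (C.V p) < alpha (C.V s.1) (C.V v)) ∧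
        ∃ u' : Fin n, IsRoutingStep C hn s.1 u' ∧ s' = (u', some s.1, false)))))

/-- The point sequence defining `L_h^k` (0-based index `j` is the `(j+1)`-st
inserted point `v_{j+1}`). -/
noncomputable def Lpt (h k : ℕ) (ε : ℝ) (j : ℕ) : ℂ :=
  if j = 0 then 0
  else if j = 2 * h + 1 then
    ((-2 : ℝ) : ℂ) + ((-(2 * (h : ℝ)) * ε : ℝ) : ℂ) * Complex.I
  else if j = 2 * h + 2 then
    ((-2 / Real.tan (theta k / 2) - 3 * (h : ℝ) * ε : ℝ) : ℂ) * Complex.I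
  else if j % 2 = 1 then
    (((((j + 1) / 2 : ℕ) : ℝ) / (h : ℝ) : ℝ) + ((-(((j + 1) / 2 : ℕ) : ℝ) * ε : ℝ) : ℂ) * Complex.I)
  else
    ((-(((j / 2 : ℕ) : ℝ) / (h : ℝ)) : ℝ) + ((-(((j / 2 : ℕ) : ℝ)) * ε : ℝ) : ℂ) * Complex.I)

/-- The point sequence defining `R_h^k`: identical to the one for `L_h^k`
except that `v_{2h+2}` is placed at `(2, -2hε)` instead of `(-2, -2hε)`. -/
noncomputable def Rpt (h k : ℕ) (ε : ℝ) (j : ℕ) : ℂ :=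
  if j = 2 * h + 1 then ((2 : ℝ) : ℂ) + ((-(2 * (h : ℝ)) * ε : ℝ) : ℂ) * Complex.I
  else Lpt h k ε j

lemma exists_edgeDir {k n : ℕ} (hn : 1 ≤ n) (C : Config k n) (i : Fin n)
    (hi : (0 : ℕ) < (i : ℕ)) : ∃ j : Fin n, EdgeDir C i j := by
  classical
  have h0 : (⟨0, hn⟩ : Fin n) < i := hi
  obtain ⟨c, hck, hcone⟩ := C.gp_cone i ⟨0, hn⟩ h0
  set S : Finset (Fin n) :=
    Finset.univ.filter (fun l => l < i ∧ inCone k (C.V i) (C.V l) c) with hS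
  have hSne : S.Nonempty := ⟨⟨0, hn⟩, by simp [hS, h0, hcone]⟩
  obtain ⟨j, hjS, hjmin⟩ :=
    S.exists_min_image (fun l => projDist k (C.V i) (C.V l) c) hSne
  simp only [hS, Finset.mem_filter, Finset.mem_univ, true_and] at hjS
  refine ⟨j, hjS.1, c, hck, hjS.2, ?_⟩
  intro l hl hcl
  exact hjmin l (by simp [hS, hl, hcl])

/-- For every integer `k ≥ 2` and every finite sequence of
`n ≥ 1` distinct points in the plane in general position, the ordered
Θ_k-graph built on this sequence is connected. -/
theorem orderedTheta_connected {k n : ℕ} (hn : 1 ≤ n) (C : Config k n) :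
    (graph C).Connected := by
  have hz : ∀ i : Fin n, (graph C).Reachable i ⟨0, hn⟩ := by
    intro i
    induction' hm : (i : ℕ) using Nat.strong_induction_on with m IH generalizing i
    subst hm
    by_cases h0 : (i : ℕ) = 0
    · have : i = ⟨0, hn⟩ := Fin.ext h0
      rw [this]
    · obtain ⟨j, hj⟩ := exists_edgeDir hn C i (Nat.pos_of_ne_zero h0)
      have hadj : (graph C).Adj i j := Or.inl hj
      exact hadj.reachable.trans (IH j hj.1 j rfl)
  have : Nonempty (Fin n) := ⟨⟨0, hn⟩⟩
  exact ⟨fun a b => (hz a).trans (hz b).symm⟩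

end OrderedTheta
end

section
/- In an ordered Θ_k-graph G = (V, E) with k ≥ 2, for every vertex u ∈ V with u ≠ v₁, either {u, v₁} ∈ E, or there exists a neighbour v ∈ N(u) lying in the canonical triangle Δuv₁ with ρ(v) < ρ(u). Consequently, the ordered Θ-routing step target of u towards v₁ exists for every u ≠ v₁. -/
/-!
Ordered Θ_k-graphs: common definitions.

Points live in the plane, modelled as `ℂ`.  For a point `u`, the plane is
partitioned into `k` cones of aperture `θ = 2π/k`; cone `j` has as bisector the
ray from `u` in direction `exp((π/2 - j·θ)·I)` (cone `0` points upwards, cones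
are numbered clockwise).  A point `w ≠ u` lies (in the interior of) cone `j` of
`u` iff the angle between `w - u` and the bisector is `< θ/2`.  `projDist`
measures the length of the orthogonal projection of `w - u` onto the bisector
of cone `j`.  Insertion orders: vertex `i : Fin n` is the `(i+1)`-st inserted
vertex, so `ρ(v) < ρ(u)` is `v < u`.
-/

namespace OrderedTheta

lemma dir_ne_zero (k j : ℕ) : dir k j ≠ 0 := Complex.exp_ne_zero _

lemma arg_dir_coe_angle (k j : ℕ) :
    ((dir k j).arg : Real.Angle) = ((Real.pi / 2 - j * theta k : ℝ) : Real.Angle) := by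
  have h : dir k j = Complex.exp (((Real.pi / 2 - j * theta k : ℝ) : ℂ) * Complex.I) := by
    rw [dir]
    congr 2
    push_cast
    ring
  rw [h, Complex.arg_exp_mul_I]
  exact Real.Angle.coe_toIocMod _ _

lemma theta_pos {k : ℕ} (hk : 2 ≤ k) : 0 < theta k := by
  have h : (0 : ℝ) < k := by exact_mod_cast Nat.lt_of_lt_of_le (by norm_num) hk
  exact div_pos (by positivity) h

/-- The open cones of an apex are pairwise disjoint. -/
lemma inCone_cone_eq {k : ℕ} (hk : 2 ≤ k) {u w : ℂ} {c c' : ℕ}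
    (hc : c < k) (hc' : c' < k) (h1 : inCone k u w c) (h2 : inCone k u w c') :
    c = c' := by
  obtain ⟨hw, h1⟩ := h1
  obtain ⟨-, h2⟩ := h2
  have hq : w - u ≠ 0 := sub_ne_zero.mpr hw
  have hθpos : 0 < theta k := theta_pos hk
  have hkpos : (0 : ℝ) < k := by exact_mod_cast Nat.lt_of_lt_of_le (by norm_num) hk
  set a := Complex.arg ((w - u) / dir k c) with ha
  set a' := Complex.arg ((w - u) / dir k c') with ha'
  have e1 : (a : Real.Angle) =
      ((w - u).arg : Real.Angle) - ((Real.pi / 2 - c * theta k : ℝ) : Real.Angle) := by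
    rw [← arg_dir_coe_angle]
    exact Complex.arg_div_coe_angle hq (dir_ne_zero k c)
  have e2 : (a' : Real.Angle) =
      ((w - u).arg : Real.Angle) - ((Real.pi / 2 - c' * theta k : ℝ) : Real.Angle) := by
    rw [← arg_dir_coe_angle]
    exact Complex.arg_div_coe_angle hq (dir_ne_zero k c')
  have hA : ((a - a' : ℝ) : Real.Angle) = (((c : ℝ) - c') * theta k : ℝ) := by
    rw [Real.Angle.coe_sub, e1, e2]
    have h3 : ((Real.pi / 2 - c' * theta k : ℝ) : Real.Angle) -
        ((Real.pi / 2 - c * theta k : ℝ) : Real.Angle) =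
        (((c : ℝ) - c') * theta k : ℝ) := by
      rw [← Real.Angle.coe_sub]
      congr 1
      ring
    rw [← h3]
    abel
  obtain ⟨m, hm⟩ := Real.Angle.angle_eq_iff_two_pi_dvd_sub.mp hA
  -- hm : (a - a') - ((c:ℝ) - c') * theta k = 2 * π * m
  have h2pi : 2 * Real.pi = (k : ℝ) * theta k := by
    rw [theta]
    field_simp
  have hdiff : |a - a'| < theta k :=
    calc |a - a'| ≤ |a| + |a'| := abs_sub _ _
      _ < theta k / 2 + theta k / 2 := add_lt_add h1 h2
      _ = theta k := by ring
  have hval : ((c : ℝ) - c' + m * k) * theta k = a - a' := by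
    rw [h2pi] at hm
    linear_combination -hm
  have habs : |(c : ℝ) - c' + m * k| < 1 := by
    have h4 : |((c : ℝ) - c' + m * k) * theta k| < theta k := by rw [hval]; exact hdiff
    rw [abs_mul, abs_of_pos hθpos] at h4
    nlinarith [h4]
  have ht0 : (c : ℤ) - c' + m * k = 0 := by
    have h5 : |(((c : ℤ) - c' + m * k : ℤ) : ℝ)| < 1 := by
      push_cast
      exact habs
    have h6 : |(c : ℤ) - c' + m * k| < 1 := by exact_mod_cast h5
    obtain ⟨hl, hr⟩ := abs_lt.mp h6
    omega
  have hck : (c : ℤ) < k := by exact_mod_cast hc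
  have hck' : (c' : ℤ) < k := by exact_mod_cast hc'
  have hkZ : (0 : ℤ) < (k : ℤ) := by exact_mod_cast Nat.lt_of_lt_of_le (by norm_num) hk
  have hm0 : m = 0 := by
    rcases lt_trichotomy m 0 with h | h | h
    · exfalso
      have hmk : m * (k : ℤ) ≤ -1 * (k : ℤ) :=
        mul_le_mul_of_nonneg_right (by omega : m ≤ -1) hkZ.le
      have h7 : (0 : ℤ) ≤ (c : ℤ) := Int.ofNat_nonneg c
      have h8 : (0 : ℤ) ≤ (c' : ℤ) := Int.ofNat_nonneg c'
      omega
    · exact h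
    · exfalso
      have hmk : 1 * (k : ℤ) ≤ m * (k : ℤ) :=
        mul_le_mul_of_nonneg_right (by omega : (1:ℤ) ≤ m) hkZ.le
      have h7 : (0 : ℤ) ≤ (c : ℤ) := Int.ofNat_nonneg c
      have h8 : (0 : ℤ) ≤ (c' : ℤ) := Int.ofNat_nonneg c'
      omega
  rw [hm0, zero_mul, add_zero] at ht0
  omega

/-- In an ordered Θ_k-graph with `k ≥ 2`, every vertex
`u ≠ v₁` either is adjacent to `v₁`, or has a neighbour of smaller insertion
order lying in the canonical triangle `Δ u v₁`; consequently the ordered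
Θ-routing step target of `u` towards `v₁` exists. -/
theorem routing_step_target_exists {k n : ℕ} (C : Config k n) (hn : 0 < n)
    (u : Fin n) (hu : u ≠ ⟨0, hn⟩) :
    ((graph C).Adj u ⟨0, hn⟩ ∨
      ∃ v : Fin n, (graph C).Adj u v ∧ v < u ∧
        inCanonical k (C.V u) (C.V ⟨0, hn⟩) (C.V v)) ∧
    ∃ v : Fin n, IsRoutingStep C hn u v := by
  classical
  set z : Fin n := ⟨0, hn⟩ with hzdef
  have h0 : (u : ℕ) ≠ 0 := fun h => hu (Fin.ext h)
  have hz : z < u := Fin.lt_def.mpr (Nat.pos_of_ne_zero h0)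
  obtain ⟨c₀, hc₀k, hc₀z⟩ := C.gp_cone u z hz
  set S : Finset (Fin n) :=
    Finset.univ.filter (fun l => l < u ∧ inCone k (C.V u) (C.V l) c₀) with hS
  have hzS : z ∈ S := by
    simp only [hS, Finset.mem_filter, Finset.mem_univ, true_and]
    exact ⟨hz, hc₀z⟩
  obtain ⟨v, hvS, hvmin⟩ :=
    S.exists_min_image (fun l => projDist k (C.V u) (C.V l) c₀) ⟨z, hzS⟩
  have hvS' := Finset.mem_filter.mp hvS
  have hv1 : v < u := hvS'.2.1
  have hv2 : inCone k (C.V u) (C.V v) c₀ := hvS'.2.2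
  have hmin : ∀ l : Fin n, l < u → inCone k (C.V u) (C.V l) c₀ →
      projDist k (C.V u) (C.V v) c₀ ≤ projDist k (C.V u) (C.V l) c₀ := by
    intro l hl hlc
    apply hvmin
    simp only [hS, Finset.mem_filter, Finset.mem_univ, true_and]
    exact ⟨hl, hlc⟩
  have hEdge : EdgeDir C u v := ⟨hv1, c₀, hc₀k, hv2, hmin⟩
  have hAdj : (graph C).Adj u v := Or.inl hEdge
  have hCan : inCanonical k (C.V u) (C.V z) (C.V v) :=
    ⟨c₀, hc₀k, hc₀z, hv2, hmin z hz hc₀z⟩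
  constructor
  · by_cases hvz : v = z
    · exact Or.inl (hvz ▸ hAdj)
    · exact Or.inr ⟨v, hAdj, hv1, hCan⟩
  · by_cases hA : (graph C).Adj u z
    · exact ⟨z, Or.inl ⟨hA, rfl⟩⟩
    · refine ⟨v, Or.inr ⟨hA, hAdj, hv1, hCan, ?_⟩⟩
      intro w _ hwlt _ c hck hvc hwc
      have hcc : c = c₀ := inCone_cone_eq C.two_le_k hck hc₀k hvc hv2
      subst hcc
      exact hmin w hwlt hwc

end OrderedTheta
end

section
/- In an ordered Θ_k-graph G = (V, E) with k ≥ 2, for every destination vertex t ∈ V, the exploration space S(v₁) contains t. -/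
/-!
Ordered Θ_k-graphs: common definitions.

Points live in the plane, modelled as `ℂ`.  For a point `u`, the plane is
partitioned into `k` cones of aperture `θ = 2π/k`; cone `j` has as bisector the
ray from `u` in direction `exp((π/2 - j·θ)·I)` (cone `0` points upwards, cones
are numbered clockwise).  A point `w ≠ u` lies (in the interior of) cone `j` of
`u` iff the angle between `w - u` and the bisector is `< θ/2`.  `projDist`
measures the length of the orthogonal projection of `w - u` onto the bisector
of cone `j`.  Insertion orders: vertex `i : Fin n` is the `(i+1)`-st inserted
vertex, so `ρ(v) < ρ(u)` is `v < u`.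
-/

namespace OrderedTheta

/-- In an ordered Θ_k-graph with `k ≥ 2`, for every
destination vertex `t`, the exploration space `S(v₁)` contains `t`. -/
theorem dest_mem_exploration_space {k n : ℕ} (C : Config k n) (hn : 0 < n)
    (t : Fin n) :
    InExplSpace C hn t t := by
  classical
  have key : ∀ m : ℕ, ∀ u : Fin n, (u : ℕ) < m → u ≤ t → InExplSpace C hn t u := by
    intro m
    induction m with
    | zero => intro u hu _; omega
    | succ m ih =>
      intro u hu hut
      by_cases h0 : (u : ℕ) = 0
      · have : u = ⟨0, hn⟩ := Fin.ext h0
        rw [this]; exact .base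
      · have h0' : (⟨0, hn⟩ : Fin n) < u := by
          simp only [Fin.lt_def]; omega
        obtain ⟨c, hck, hcone0⟩ := C.gp_cone u ⟨0, hn⟩ h0'
        let S : Finset (Fin n) :=
          Finset.univ.filter (fun l : Fin n => l < u ∧ inCone k (C.V u) (C.V l) c)
        have hSne : S.Nonempty := ⟨⟨0, hn⟩, by simp [S, h0', hcone0]⟩
        obtain ⟨w, hwS, hwmin⟩ :=
          S.exists_min_image (fun l => projDist k (C.V u) (C.V l) c) hSne
        have hwS' : w < u ∧ inCone k (C.V u) (C.V w) c := by
          simpa [S] using hwS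
        have hedge : EdgeDir C u w := by
          refine ⟨hwS'.1, c, hck, hwS'.2, ?_⟩
          intro l hl hlc
          exact hwmin l (by simp [S, hl, hlc])
        have hcand : ExplCand C hn t w u :=
          ⟨Or.inr hedge, hwS'.1, hut, c, hck, hcone0, hwS'.2⟩
        have hwlt : (w : ℕ) < m := by
          have := hwS'.1
          simp only [Fin.lt_def] at this
          omega
        exact .step (ih w hwlt (le_of_lt (lt_of_lt_of_le hwS'.1 hut))) hcand
  exact key ((t : ℕ) + 1) t (Nat.lt_succ_self _) le_rfl

end OrderedTheta
end
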